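/- arXiv:quant-ph/9904079 — 6 statements merged into one kernel-verified Lean document; each statement's English description precedes it below -/
import Mathlib

section
/- Let P be a nonzero multilinear polynomial over ℝ in N variables (every variable occurs with degree at most 1 in P) of total degree at most d. Then the number of points X ∈ {0,1}^N with P(X) ≠ 0 is at least 2^{N−d}; equivalently, the fraction of Boolean inputs on which P is nonzero is at least 2^{−d}. -/
open MvPolynomial Finset

lemma schwartz_key : ∀ (N : ℕ) (P : MvPolynomial (Fin N) ℝ), P ≠ 0 →
    (∀ i, P.degreeOf i ≤ 1) → ∀ d, P.totalDegree ≤ d →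
    2 ^ (N - d) ≤ (Finset.univ.filter fun x : Fin N → Bool =>
      MvPolynomial.eval (fun i => if x i then (1 : ℝ) else 0) P ≠ 0).card := by
  intro N
  induction N with
  | zero =>
    intro P hP hml d hd
    obtain ⟨a, rfl⟩ := MvPolynomial.C_surjective (Fin 0) P
    have ha : a ≠ 0 := fun h => hP (by simp [h])
    simp only [Nat.zero_sub, pow_zero]
    have : (Finset.univ.filter fun x : Fin 0 → Bool =>
        MvPolynomial.eval (fun i => if x i then (1 : ℝ) else 0) (C a) ≠ 0) = Finset.univ := by
      ext x; simp [ha]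
    rw [this]
    simp
  | succ N ih =>
    intro P hP hml d hd
    obtain ⟨q, hq⟩ : ∃ q, q = finSuccEquiv ℝ N P := ⟨_, rfl⟩
    obtain ⟨Q, hQdef⟩ : ∃ Q, Q = q.coeff 1 := ⟨_, rfl⟩
    obtain ⟨R, hRdef⟩ : ∃ R, R = q.coeff 0 := ⟨_, rfl⟩
    have hqdeg : q.natDegree ≤ 1 := by
      rw [hq, natDegree_finSuccEquiv]; exact hml 0
    have hqeq : q = Polynomial.C Q * Polynomial.X + Polynomial.C R := by
      rw [hQdef, hRdef]; exact Polynomial.eq_X_add_C_of_natDegree_le_one hqdeg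
    -- evaluation identity
    have heval : ∀ (b : Bool) (y : Fin N → Bool),
        MvPolynomial.eval (fun i => if (Fin.cons b y : Fin (N+1) → Bool) i then (1:ℝ) else 0) P
        = MvPolynomial.eval (fun i => if y i then (1:ℝ) else 0) R
          + MvPolynomial.eval (fun i => if y i then (1:ℝ) else 0) Q * (if b then (1:ℝ) else 0) := by
      intro b y
      have hpt : (fun i => if (Fin.cons b y : Fin (N+1) → Bool) i then (1:ℝ) else 0)
          = Fin.cons (if b then (1:ℝ) else 0) (fun i => if y i then (1:ℝ) else 0) := by
        funext i
        refine Fin.cases ?_ ?_ i <;> simp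
      rw [hpt, MvPolynomial.eval_eq_eval_mv_eval']
      rw [← hq, hqeq]
      simp only [Polynomial.map_add, Polynomial.map_mul, Polynomial.map_C, Polynomial.map_X,
        Polynomial.eval_add, Polynomial.eval_mul, Polynomial.eval_C, Polynomial.eval_X]
      ring
    -- multilinearity of coefficients
    have hmlc : ∀ i : ℕ, ∀ j, (q.coeff i).degreeOf j ≤ 1 := by
      intro i j
      rw [hq]
      exact le_trans (degreeOf_coeff_finSuccEquiv P j i) (hml j.succ)
    by_cases hQ : Q = 0
    · -- P ≅ R, double count
      have hR : R ≠ 0 := by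
        intro h
        apply hP
        have : q = 0 := by rw [hqeq, hQ, h]; simp
        have := congrArg (finSuccEquiv ℝ N).symm this
        simpa [hq] using this
      have hRd : R.totalDegree ≤ d := by
        refine le_trans ?_ hd
        simpa [← hq, ← hRdef] using totalDegree_coeff_finSuccEquiv_add_le P 0 (by rw [← hq, ← hRdef]; exact hR)
      have hcard := ih R hR (fun j => by rw [hRdef]; exact hmlc 0 j) d hRd
      -- injection from Bool ×ˢ filter(R)
      have hinj : ((Finset.univ : Finset Bool) ×ˢ (Finset.univ.filter fun y : Fin N → Bool =>
          MvPolynomial.eval (fun i => if y i then (1:ℝ) else 0) R ≠ 0)).card ≤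
          (Finset.univ.filter fun x : Fin (N+1) → Bool =>
          MvPolynomial.eval (fun i => if x i then (1 : ℝ) else 0) P ≠ 0).card := by
        apply Finset.card_le_card_of_injOn (fun p : Bool × (Fin N → Bool) => (Fin.cons p.1 p.2 : Fin (N+1) → Bool))
        · rintro ⟨b, y⟩ hby
          simp only [Finset.mem_coe, Finset.mem_product, Finset.mem_filter, Finset.mem_univ, true_and] at hby ⊢
          rw [heval b y, hQ]
          simpa using hby
        · rintro ⟨b, y⟩ _ ⟨b', y'⟩ _ h
          have h0 := congrArg (fun f : Fin (N+1) → Bool => f 0) h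
          have hs := congrArg (fun f : Fin (N+1) → Bool => f ∘ Fin.succ) h
          simp only [Fin.cons_zero] at h0
          have : y = y' := by funext i; simpa using congrFun hs i
          simp [h0, this]
      rw [Finset.card_product] at hinj
      simp only [Finset.card_univ, Fintype.card_bool] at hinj
      calc 2 ^ (N + 1 - d) ≤ 2 ^ (N - d + 1) := by
            clear * -; exact Nat.pow_le_pow_right (by norm_num) (by omega)
        _ = 2 * 2 ^ (N - d) := by ring
        _ ≤ 2 * (Finset.univ.filter fun y : Fin N → Bool =>
              MvPolynomial.eval (fun i => if y i then (1:ℝ) else 0) R ≠ 0).card :=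
            Nat.mul_le_mul_left _ hcard
        _ ≤ _ := hinj
    · -- Q ≠ 0
      have hQd : Q.totalDegree + 1 ≤ d := by
        rw [hQdef, hq]
        exact le_trans (totalDegree_coeff_finSuccEquiv_add_le P 1 (by rw [← hq, ← hQdef]; exact hQ)) hd
      have hd1 : 1 ≤ d := by omega
      have hcard := ih Q hQ (fun j => by rw [hQdef]; exact hmlc 1 j) (d - 1) (by omega)
      have hinj : ((Finset.univ.filter fun y : Fin N → Bool =>
          MvPolynomial.eval (fun i => if y i then (1:ℝ) else 0) Q ≠ 0)).card ≤
          (Finset.univ.filter fun x : Fin (N+1) → Bool =>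
          MvPolynomial.eval (fun i => if x i then (1 : ℝ) else 0) P ≠ 0).card := by
        apply Finset.card_le_card_of_injOn (fun y : Fin N → Bool =>
          (Fin.cons (if MvPolynomial.eval (fun i => if y i then (1:ℝ) else 0) R = 0 then true else false) y : Fin (N+1) → Bool))
        · intro y hy
          simp only [Finset.mem_coe, Finset.mem_filter, Finset.mem_univ, true_and] at hy ⊢
          by_cases hRy : MvPolynomial.eval (fun i => if y i then (1:ℝ) else 0) R = 0
          · rw [if_pos hRy, heval, hRy]
            simpa using hy
          · rw [if_neg hRy, heval]
            simpa using hRy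
        · intro y _ y' _ h
          have hs := congrArg (fun f : Fin (N+1) → Bool => f ∘ Fin.succ) h
          funext i; simpa using congrFun hs i
      calc 2 ^ (N + 1 - d) = 2 ^ (N - (d - 1)) := by
            clear * - hd1; congr 1; omega
        _ ≤ _ := le_trans hcard hinj

/-- Schwartz's lemma for multilinear polynomials: a nonzero multilinear
polynomial of total degree at most `d` in `N` variables is nonzero on at
least `2^(N-d)` Boolean points, i.e. on at least a `2^(-d)` fraction of
all `2^N` Boolean points. -/
theorem schwartz_multilinear_boolean
    {N d : ℕ} (P : MvPolynomial (Fin N) ℝ) (hP : P ≠ 0)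
    (hml : ∀ i, P.degreeOf i ≤ 1) (hd : P.totalDegree ≤ d) :
    2 ^ (N - d) ≤ Nat.card {x : Fin N → Bool //
        MvPolynomial.eval (fun i => if x i then (1 : ℝ) else 0) P ≠ 0} ∧
    2 ^ N ≤ Nat.card {x : Fin N → Bool //
        MvPolynomial.eval (fun i => if x i then (1 : ℝ) else 0) P ≠ 0} * 2 ^ d := by
  have key := schwartz_key N P hP hml d hd
  have hcard : Nat.card {x : Fin N → Bool //
      MvPolynomial.eval (fun i => if x i then (1 : ℝ) else 0) P ≠ 0} =
      (Finset.univ.filter fun x : Fin N → Bool =>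
        MvPolynomial.eval (fun i => if x i then (1 : ℝ) else 0) P ≠ 0).card := by
    rw [Nat.card_eq_fintype_card, Fintype.card_subtype]
  rw [hcard]
  refine ⟨key, ?_⟩
  calc 2 ^ N ≤ 2 ^ (N - d + d) := by
        clear * -; exact Nat.pow_le_pow_right (by norm_num) (by omega)
    _ = 2 ^ (N - d) * 2 ^ d := pow_add 2 _ _
    _ ≤ _ := Nat.mul_le_mul_right _ key
end

section
/- Fix n ≥ 1 and let V = (ZMod 2)^n. Encode a function x : V → V as a Boolean string X ∈ {0,1}^N with N = n·2^n, whose coordinates X_{i,t} (for i ∈ V and 1 ≤ t ≤ n) are the bits of the values x(i). Let P be a multilinear real polynomial in these N Boolean variables such that P(X) = 0 whenever f(x) = 0 and 1/2 ≤ P(X) ≤ 1 whenever f(x) = 1. Then the total degree of P is at least n(2^{n−1} − 1). -/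
open MvPolynomial Finset

lemma sz_cube : ∀ (N : ℕ) (P : MvPolynomial (Fin N) ℝ),
    (∀ v, P.degreeOf v ≤ 1) → P ≠ 0 →
    2 ^ (N - P.totalDegree) ≤
      (Finset.univ.filter fun x : Fin N → Bool =>
        MvPolynomial.eval (fun i => if x i then (1:ℝ) else 0) P ≠ 0).card := by
  intro N
  induction N with
  | zero =>
    intro P hml hP
    obtain ⟨p, rfl⟩ := MvPolynomial.C_surjective (Fin 0) P
    have hp : p ≠ 0 := by simpa using hP
    calc 2 ^ (0 - (C p : MvPolynomial (Fin 0) ℝ).totalDegree) = 1 := by simp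
      _ ≤ _ := Finset.card_pos.2 ⟨default, by
        simp only [Finset.mem_filter, Finset.mem_univ, true_and]
        simpa using hp⟩
  | succ N ih =>
    intro P hml hP
    set q := finSuccEquiv ℝ N P with hqdef
    have hq1 : q.natDegree ≤ 1 := by
      rw [hqdef, natDegree_finSuccEquiv]; exact hml 0
    set Q := q.coeff 0 with hQ
    set R := q.coeff 1 with hR
    have heval : ∀ (y : ℝ) (s : Fin N → ℝ),
        eval (Fin.cons y s : Fin (N+1) → ℝ) P = eval s Q + eval s R * y := by
      intro y s
      rw [eval_eq_eval_mv_eval', Polynomial.eval_eq_sum_range' (n := 2)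
        (lt_of_le_of_lt (Polynomial.natDegree_map_le) (lt_of_le_of_lt hq1 one_lt_two)),
        Finset.sum_range_succ, Finset.sum_range_one]
      simp [coeff_eval_eq_eval_coeff, ← hqdef, hQ, hR]
    have hpoint : ∀ (b : Bool) (s : Fin N → Bool),
        (fun i => if (Fin.cons b s : Fin (N+1) → Bool) i then (1:ℝ) else 0)
          = Fin.cons (if b then (1:ℝ) else 0) (fun i => if s i then (1:ℝ) else 0) := by
      intro b s
      funext i
      refine Fin.cases ?_ ?_ i <;> simp
    have hmlQ : ∀ v, Q.degreeOf v ≤ 1 := fun v => le_trans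
      (degreeOf_coeff_finSuccEquiv P v 0) (hml v.succ)
    have hmlR : ∀ v, R.degreeOf v ≤ 1 := fun v => le_trans
      (degreeOf_coeff_finSuccEquiv P v 1) (hml v.succ)
    by_cases hR0 : R = 0
    · -- the x_0-free case
      have hQ0 : Q ≠ 0 := by
        intro h
        apply hP
        have hz : q = 0 := by
          rw [Polynomial.eq_X_add_C_of_natDegree_le_one hq1, ← hQ, ← hR, h, hR0]
          simp
        rw [hqdef] at hz
        exact (EmbeddingLike.map_eq_zero_iff).1 hz
      have hdQ : Q.totalDegree ≤ P.totalDegree := by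
        simpa using totalDegree_coeff_finSuccEquiv_add_le P 0 hQ0
      have hIH := ih Q hmlQ hQ0
      have hsub : (Finset.univ ×ˢ (Finset.univ.filter fun s : Fin N → Bool =>
            eval (fun i => if s i then (1:ℝ) else 0) Q ≠ 0) : Finset (Bool × (Fin N → Bool))).card
          ≤ (Finset.univ.filter fun x : Fin (N+1) → Bool =>
            eval (fun i => if x i then (1:ℝ) else 0) P ≠ 0).card := by
        apply Finset.card_le_card_of_injOn (fun p => Fin.cons p.1 p.2)
        · rintro ⟨b, s⟩ hb
          simp only [Finset.mem_coe, Finset.mem_product, Finset.mem_filter, Finset.mem_univ, true_and] at hb ⊢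
          rw [hpoint, heval, hR0]
          simpa using hb
        · rintro ⟨b1, s1⟩ - ⟨b2, s2⟩ - h
          have h0 := congrFun h 0
          have hs : s1 = s2 := funext fun i => by
            simpa using congrFun h i.succ
          simp only [Fin.cons_zero] at h0
          simp [h0, hs]
      rw [Finset.card_product, Finset.card_univ, Fintype.card_bool] at hsub
      calc 2 ^ (N + 1 - P.totalDegree)
          ≤ 2 ^ ((N - Q.totalDegree) + 1) :=
            by clear hsub hIH ih; apply Nat.pow_le_pow_right <;> omega
        _ = 2 * 2 ^ (N - Q.totalDegree) := by ring
        _ ≤ _ := le_trans (Nat.mul_le_mul_left 2 hIH) hsub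
    · -- R ≠ 0
      have hdR : R.totalDegree + 1 ≤ P.totalDegree :=
        totalDegree_coeff_finSuccEquiv_add_le P 1 hR0
      have hIH := ih R hmlR hR0
      have hsub : (Finset.univ.filter fun s : Fin N → Bool =>
            eval (fun i => if s i then (1:ℝ) else 0) R ≠ 0).card
          ≤ (Finset.univ.filter fun x : Fin (N+1) → Bool =>
            eval (fun i => if x i then (1:ℝ) else 0) P ≠ 0).card := by
        apply Finset.card_le_card_of_injOn
          (fun s => (Fin.cons (decide (eval (fun i => if s i then (1:ℝ) else 0) Q = 0)) s :
            Fin (N+1) → Bool))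
        · intro s hs
          simp only [Finset.mem_coe, Finset.mem_filter, Finset.mem_univ, true_and] at hs ⊢
          rw [hpoint, heval]
          by_cases hq0 : eval (fun i => if s i then (1:ℝ) else 0) Q = 0
          · simp [hq0, hs]
          · simp [hq0]
        · intro s1 _ s2 _ h
          funext i
          simpa using congrFun h i.succ
      calc 2 ^ (N + 1 - P.totalDegree)
          ≤ 2 ^ (N - R.totalDegree) :=
            by clear hsub hIH ih; apply Nat.pow_le_pow_right <;> omega
        _ ≤ _ := hIH
        _ ≤ _ := hsub

open Classical in
/-- A chosen nonzero period of `x`, when one exists. -/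
noncomputable def pw {n : ℕ} (x : (Fin n → ZMod 2) → (Fin n → ZMod 2)) : Fin n → ZMod 2 :=
  if h : ∃ k, k ≠ 0 ∧ ∀ i, x (i + k) = x i then h.choose else 0

lemma pw_spec {n : ℕ} {x : (Fin n → ZMod 2) → (Fin n → ZMod 2)}
    (h : ∃ k, k ≠ 0 ∧ ∀ i, x (i + k) = x i) :
    pw x ≠ 0 ∧ ∀ i, x (i + pw x) = x i := by
  rw [pw, dif_pos h]; exact h.choose_spec

open Classical in
/-- A chosen coordinate where `k` is `1`. -/
noncomputable def iw {m : ℕ} (k : Fin (m+1) → ZMod 2) : Fin (m+1) :=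
  if h : ∃ t, k t = 1 then h.choose else 0

lemma iw_spec {m : ℕ} {k : Fin (m+1) → ZMod 2} (hk : k ≠ 0) : k (iw k) = 1 := by
  have hz : ∀ z : ZMod 2, z ≠ 1 → z = 0 := by decide
  have h : ∃ t, k t = 1 := by
    by_contra hc; push_neg at hc
    exact hk (funext fun t => hz _ (hc t))
  rw [iw, dif_pos h]; exact h.choose_spec

/-- Encoding of a periodic function by its period and its restriction to a
hyperplane transversal to the period. -/
noncomputable def enc {m : ℕ} (x : (Fin (m+1) → ZMod 2) → (Fin (m+1) → ZMod 2)) :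
    (Fin (m+1) → ZMod 2) × ((Fin m → ZMod 2) → (Fin (m+1) → ZMod 2)) :=
  (pw x, fun u => x ((iw (pw x)).insertNth 0 u))

lemma enc_inj {m : ℕ} {x y : (Fin (m+1) → ZMod 2) → (Fin (m+1) → ZMod 2)}
    (hx : ∃ k, k ≠ 0 ∧ ∀ i, x (i + k) = x i)
    (hy : ∃ k, k ≠ 0 ∧ ∀ i, y (i + k) = y i)
    (h : enc x = enc y) : x = y := by
  obtain ⟨hx0, hxp⟩ := pw_spec hx
  obtain ⟨hy0, hyp⟩ := pw_spec hy
  have hk : pw x = pw y := congrArg Prod.fst h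
  set k := pw x with hkdef
  rw [← hk] at hyp
  set j := iw k with hjdef
  have hkj : k j = 1 := iw_spec hx0
  have h2 : ∀ u, x (j.insertNth 0 u) = y (j.insertNth 0 u) := by
    intro u
    have := congrFun (congrArg Prod.snd h) u
    simpa [enc, ← hk, ← hkdef, ← hjdef] using this
  have key : ∀ i, i j = 0 → x i = y i := by
    intro i hi
    have h1 := Fin.insertNth_self_removeNth j i
    rw [hi] at h1
    rw [← h1]
    exact h2 _
  have hz : ∀ z : ZMod 2, z = 0 ∨ z = 1 := by decide
  have hkk : ∀ i : Fin (m+1) → ZMod 2, i + k + k = i := by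
    intro i; funext t
    have : ∀ z w : ZMod 2, z + w + w = z := by decide
    exact this _ _
  funext i
  rcases hz (i j) with hi | hi
  · exact key i hi
  · have hik : (i + k) j = 0 := by
      have : ∀ z w : ZMod 2, z = 1 → w = 1 → z + w = 0 := by decide
      exact this _ _ hi hkj
    have e1 : x i = x (i + k) := by
      conv_lhs => rw [← hkk i]
      exact hxp (i + k)
    have e2 : y i = y (i + k) := by
      conv_lhs => rw [← hkk i]
      exact hyp (i + k)
    rw [e1, e2, key _ hik]

set_option maxHeartbeats 1000000 in
/-- Any multilinear real polynomial in the `n·2^n` Boolean variables encoding a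
function `x : (ZMod 2)^n → (ZMod 2)^n` that vanishes on all aperiodic inputs
(`f(x) = 0`) and takes values in `[1/2, 1]` on all inputs having a nonzero
period (`f(x) = 1`) must have total degree at least `n(2^(n-1) - 1)`. -/
theorem totalDegree_lower_bound_modified_simon
    {n : ℕ} (hn : 1 ≤ n)
    (P : MvPolynomial ((Fin n → ZMod 2) × Fin n) ℝ)
    (hml : ∀ v, P.degreeOf v ≤ 1)
    (h0 : ∀ x : (Fin n → ZMod 2) → (Fin n → ZMod 2),
      ¬ (∃ k, k ≠ 0 ∧ ∀ i, x (i + k) = x i) →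
      MvPolynomial.eval (fun p => ((x p.1 p.2).val : ℝ)) P = 0)
    (h1 : ∀ x : (Fin n → ZMod 2) → (Fin n → ZMod 2),
      (∃ k, k ≠ 0 ∧ ∀ i, x (i + k) = x i) →
      MvPolynomial.eval (fun p => ((x p.1 p.2).val : ℝ)) P ∈ Set.Icc (1/2 : ℝ) 1) :
    n * (2 ^ (n - 1) - 1) ≤ P.totalDegree := by
  classical
  obtain ⟨m, rfl⟩ : ∃ m, n = m + 1 := ⟨n - 1, by omega⟩
  obtain ⟨N, hNcard⟩ : ∃ N, Fintype.card ((Fin (m+1) → ZMod 2) × Fin (m+1)) = N := ⟨_, rfl⟩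
  have hN : N = 2 ^ (m+1) * (m+1) := by
    rw [← hNcard]; simp [Fintype.card_fun]
  -- P is nonzero
  have hPne : P ≠ 0 := by
    intro hP0
    have hk : (fun _ => (1 : ZMod 2)) ≠ (0 : Fin (m+1) → ZMod 2) := by
      intro h
      have := congrFun h 0
      simp at this
    have hmem := h1 (fun _ => 0) ⟨fun _ => 1, hk, fun i => rfl⟩
    rw [hP0] at hmem
    simp at hmem
    norm_num at hmem
  have e : ((Fin (m+1) → ZMod 2) × Fin (m+1)) ≃ Fin N :=
    (Fintype.equivFin _).trans (finCongr hNcard)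
  have hP' : MvPolynomial.rename e P ≠ 0 := by
    intro h
    exact hPne (MvPolynomial.rename_injective e e.injective (by rw [h, map_zero]))
  have hml' : ∀ v, (MvPolynomial.rename e P).degreeOf v ≤ 1 := by
    intro v
    have h2 := MvPolynomial.degreeOf_rename_of_injective (p := P) e.injective (e.symm v)
    rw [Equiv.apply_symm_apply] at h2
    rw [h2]
    exact hml _
  have htd : (MvPolynomial.rename e P).totalDegree ≤ P.totalDegree :=
    MvPolynomial.totalDegree_rename_le _ _
  have hsz := sz_cube _ (MvPolynomial.rename e P) hml' hP'
  -- each nonzero Boolean point gives a periodic function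
  have hcor : ∀ X : Fin N → Bool,
      MvPolynomial.eval (fun i => if X i then (1:ℝ) else 0) (MvPolynomial.rename e P)
        = MvPolynomial.eval
          (fun p => (((fun i t => if X (e (i, t)) then (1 : ZMod 2) else 0) p.1 p.2).val : ℝ)) P := by
    intro X
    rw [MvPolynomial.eval_rename]
    have hfun : ((fun i => if X i then (1:ℝ) else 0) ∘ ⇑e)
        = fun p => (((fun i t => if X (e (i, t)) then (1 : ZMod 2) else 0) p.1 p.2).val : ℝ) := by
      funext p
      by_cases hXp : X (e p) <;>
        simp [Function.comp, hXp, show ((1:ZMod 2).val) = 1 from rfl,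
          show ((0:ZMod 2).val) = 0 from rfl]
    rw [hfun]
  have hper : ∀ X : Fin N → Bool,
      MvPolynomial.eval (fun i => if X i then (1:ℝ) else 0)
        (MvPolynomial.rename e P) ≠ 0 →
      ∃ k, k ≠ 0 ∧ ∀ i, (fun i t => if X (e (i, t)) then (1 : ZMod 2) else 0) (i + k)
        = (fun i t => if X (e (i, t)) then (1 : ZMod 2) else 0) i := by
    intro X hX
    by_contra hnp
    exact hX ((hcor X).trans (h0 (fun i t => if X (e (i, t)) then (1 : ZMod 2) else 0) hnp))
  -- injection into period/transversal data
  have hcardle : (Finset.univ.filter fun X : Fin N → Bool => MvPolynomial.eval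
        (fun i => if X i then (1:ℝ) else 0) (MvPolynomial.rename e P) ≠ 0).card
      ≤ Fintype.card ((Fin (m+1) → ZMod 2) ×
        ((Fin m → ZMod 2) → (Fin (m+1) → ZMod 2))) := by
    rw [← Fintype.card_coe]
    apply Fintype.card_le_of_injective
      (fun X => enc (fun i t => if X.1 (e (i, t)) then (1 : ZMod 2) else 0))
    rintro ⟨X1, hX1⟩ ⟨X2, hX2⟩ h
    rw [Finset.mem_filter] at hX1 hX2
    have hxx := enc_inj (hper X1 hX1.2) (hper X2 hX2.2) h
    have hX12 : X1 = X2 := by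
      funext v
      have h3 := congrFun (congrFun hxx (e.symm v).1) (e.symm v).2
      simp only [Prod.mk.eta, Equiv.apply_symm_apply] at h3
      by_cases b1 : X1 v <;> by_cases b2 : X2 v <;> simp [b1, b2] at h3 ⊢
    simp [hX12]
  have hTcard : Fintype.card ((Fin (m+1) → ZMod 2) ×
      ((Fin m → ZMod 2) → (Fin (m+1) → ZMod 2))) = 2 ^ ((m+1) + (m+1) * 2 ^ m) := by
    simp [Fintype.card_fun, pow_add, pow_mul, mul_comm]
  have hexp : N - (MvPolynomial.rename e P).totalDegree ≤ (m+1) + (m+1) * 2 ^ m :=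
    (Nat.pow_le_pow_iff_right (by norm_num)).1
      (le_trans hsz (le_trans hcardle (le_of_eq hTcard)))
  clear hsz hcardle hcor hper hml hml' h0 h1
  -- final arithmetic
  obtain ⟨t, ht⟩ : ∃ t, 2 ^ m = t + 1 := ⟨2 ^ m - 1, by
    have := Nat.one_le_two_pow (n := m); omega⟩
  have key : N = (m+1) * (2 ^ m - 1) + ((m+1) + (m+1) * 2 ^ m) := by
    rw [hN, pow_succ, ht, Nat.add_sub_cancel]; ring
  have hgoal : m + 1 - 1 = m := by omega
  rw [hgoal]
  omega
end

section
/- Fix n ≥ 1 and let V = (ZMod 2)^n, with inner product (a, b) = Σ_{t=1}^n a_t·b_t computed in ZMod 2. Let k ∈ V be nonzero, let x : V → V be k-periodic, and let j ∈ V and i' ∈ V satisfy (k, i') = 1. Then Σ_{i ∈ V, x(i) = j} (−1)^{(i, i')} = 0, where the exponent (i, i') ∈ {0,1} is the inner product lifted to an integer. -/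
/-- If `x` is `k`-periodic for a nonzero `k` and `i'` is non-orthogonal to `k`
(inner product `(k, i') = 1` in `ZMod 2`), then the signed sum
`Σ_{i : x(i) = j} (-1)^{(i, i')}` vanishes. -/
theorem periodic_signed_fiber_sum_zero
    {n : ℕ} (hn : 1 ≤ n)
    (k : Fin n → ZMod 2) (hk : k ≠ 0)
    (x : (Fin n → ZMod 2) → (Fin n → ZMod 2))
    (hx : ∀ i, x (i + k) = x i)
    (j : Fin n → ZMod 2) (i' : Fin n → ZMod 2)
    (hki' : ∑ t, k t * i' t = 1) :
    ∑ i ∈ Finset.univ.filter (fun i => x i = j),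
      ((-1 : ℤ) ^ (∑ t, i t * i' t).val) = 0 := by
  apply Finset.sum_involution (fun i _ => i + k)
  · intro i hi
    have hsum : (∑ t, (i + k) t * i' t) = (∑ t, i t * i' t) + 1 := by
      rw [← hki', ← Finset.sum_add_distrib]
      congr 1; ext t; simp [add_mul]
    rw [hsum]
    have : (∑ t, i t * i' t) = 0 ∨ (∑ t, i t * i' t) = 1 := by
      generalize (∑ t, i t * i' t) = s
      revert s; decide
    rcases this with h | h <;> rw [h] <;> decide
  · intro i hi h
    intro hik
    apply hk
    have := congrArg (fun z => z - i) hik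
    simpa using this
  · intro i hi
    simp only [Finset.mem_filter, Finset.mem_univ, true_and] at hi ⊢
    rw [hx, hi]
  · intro i hi
    ext t
    simp [add_assoc, CharTwo.add_self_eq_zero]
end

section
/- Fix α ∈ (0, 1/2). There exist constants c_1, c_2 > 0 (depending only on α) such that for every N ≥ 1, the μ-expectation of the classical query cost N/(|X|+1) satisfies c_1·N^α ≤ Σ_{X ∈ {0,1}^N} μ(X)·N/(|X|+1) ≤ c_2·N^α. -/
open Finset

/-- Hamming weight of a Boolean input `X ∈ {0,1}^N`. -/
def hammingWt {N : ℕ} (X : Fin N → Bool) : ℕ :=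
  (Finset.univ.filter (fun i => X i = true)).card

/-- The distribution `μ(X) = c / (C(N,|X|)·(|X|+1)^α·(N+1)^(1-α))`. -/
noncomputable def muDist (α : ℝ) {N : ℕ} (c : ℝ) (X : Fin N → Bool) : ℝ :=
  c / ((N.choose (hammingWt X) : ℝ) * ((hammingWt X : ℝ) + 1) ^ α *
    ((N : ℝ) + 1) ^ (1 - α))

open Real

lemma card_weight (N t : ℕ) :
    (Finset.univ.filter (fun X : Fin N → Bool => hammingWt X = t)).card = N.choose t := by
  have key : (Finset.univ.filter (fun X : Fin N → Bool => hammingWt X = t)).card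
      = (Finset.powersetCard t (Finset.univ : Finset (Fin N))).card := by
    refine Finset.card_bij' (fun X _ => Finset.univ.filter (fun i => X i = true))
      (fun s _ => fun i => decide (i ∈ s)) ?_ ?_ ?_ ?_
    · intro X hX
      simp only [Finset.mem_filter, Finset.mem_univ, true_and] at hX
      simp only [Finset.mem_powersetCard]
      exact ⟨Finset.subset_univ _, hX⟩
    · intro s hs
      simp only [Finset.mem_powersetCard] at hs
      simp only [Finset.mem_filter, Finset.mem_univ, true_and]
      rw [hammingWt, ← hs.2]
      congr 1
      ext i; simp
    · intro X hX
      funext i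
      simp
    · intro s hs
      ext i; simp
  rw [key, Finset.card_powersetCard, Finset.card_univ, Fintype.card_fin]

lemma sum_by_weight (N : ℕ) (g : ℕ → ℝ) :
    ∑ X : Fin N → Bool, g (hammingWt X)
      = ∑ t ∈ Finset.range (N + 1), (N.choose t : ℝ) * g t := by
  have hmap : ∀ X : Fin N → Bool, X ∈ Finset.univ → hammingWt X ∈ Finset.range (N + 1) := by
    intro X _
    simp only [Finset.mem_range, Nat.lt_succ_iff, hammingWt]
    exact (Finset.card_filter_le _ _).trans (by simp)
  rw [← Finset.sum_fiberwise_of_maps_to' hmap g]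
  refine Finset.sum_congr rfl fun t _ => ?_
  rw [Finset.sum_const, card_weight, nsmul_eq_mul]

lemma step_ineq {p : ℝ} (hp0 : 0 ≤ p) (hp1 : p ≤ 1) {k : ℝ} (hk : 0 ≤ k) :
    k ^ p ≤ (k + 1) ^ p - p * (k + 1) ^ (p - 1) := by
  have hk1 : (0:ℝ) < k + 1 := by linarith
  have hs : (-1 : ℝ) ≤ -(1 / (k + 1)) := by
    rw [neg_le_neg_iff]
    rw [div_le_one hk1]; linarith
  have hb := rpow_one_add_le_one_add_mul_self hs hp0 hp1
  have he : (1 : ℝ) + -(1 / (k + 1)) = k / (k + 1) := by field_simp; ring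
  rw [he] at hb
  have h2 : (k / (k + 1)) ^ p = k ^ p / (k + 1) ^ p := Real.div_rpow hk hk1.le p
  rw [h2] at hb
  have h3 : k ^ p ≤ (1 + p * -(1 / (k + 1))) * (k + 1) ^ p := by
    rw [div_le_iff₀ (rpow_pos_of_pos hk1 p)] at hb; exact hb
  calc k ^ p ≤ (1 + p * -(1 / (k + 1))) * (k + 1) ^ p := h3
    _ = (k + 1) ^ p - p * ((k + 1) ^ p / (k + 1)) := by ring
    _ = (k + 1) ^ p - p * (k + 1) ^ (p - 1) := by
        rw [← Real.rpow_sub_one hk1.ne']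

lemma S_le {α : ℝ} (hα0 : 0 < α) (hα1 : α < 1) (N : ℕ) :
    ∑ t ∈ Finset.range (N + 1), ((t : ℝ) + 1) ^ (-α)
      ≤ ((N : ℝ) + 1) ^ (1 - α) / (1 - α) := by
  have hp0 : (0:ℝ) ≤ 1 - α := by linarith
  have hp1 : (1:ℝ) - α ≤ 1 := by linarith
  have hpos : (0:ℝ) < 1 - α := by linarith
  have key : ∀ t : ℕ, ((t : ℝ) + 1) ^ (-α)
      ≤ (((t : ℝ) + 1) ^ (1 - α) - (t : ℝ) ^ (1 - α)) / (1 - α) := by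
    intro t
    have := step_ineq hp0 hp1 (k := (t : ℝ)) (by positivity)
    have he : (1 - α) - 1 = -α := by ring
    rw [he] at this
    rw [le_div_iff₀ hpos]
    nlinarith
  calc ∑ t ∈ Finset.range (N + 1), ((t : ℝ) + 1) ^ (-α)
      ≤ ∑ t ∈ Finset.range (N + 1),
          ((((t : ℝ) + 1) ^ (1 - α) - (t : ℝ) ^ (1 - α)) / (1 - α)) :=
        Finset.sum_le_sum fun t _ => key t
    _ = (∑ t ∈ Finset.range (N + 1),
          ((((t : ℝ) + 1) ^ (1 - α)) - (t : ℝ) ^ (1 - α))) / (1 - α) := by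
        rw [Finset.sum_div]
    _ = (((N : ℝ) + 1) ^ (1 - α) - ((0:ℕ) : ℝ) ^ (1 - α)) / (1 - α) := by
        congr 1
        have h2 : ∀ t : ℕ, ((t : ℝ) + 1) ^ (1 - α) - (t : ℝ) ^ (1 - α)
            = (fun i : ℕ => (i : ℝ) ^ (1 - α)) (t + 1) - (fun i : ℕ => (i : ℝ) ^ (1 - α)) t := by
          intro t; push_cast; ring_nf
        rw [Finset.sum_congr rfl fun t _ => h2 t,
          Finset.sum_range_sub (fun i : ℕ => (i : ℝ) ^ (1 - α))]
        push_cast; ring_nf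
    _ = ((N : ℝ) + 1) ^ (1 - α) / (1 - α) := by
        rw [Nat.cast_zero, Real.zero_rpow hpos.ne']; ring

lemma S_ge {α : ℝ} (hα0 : 0 < α) (hα1 : α < 1) (N : ℕ) :
    ((N : ℝ) + 1) ^ (1 - α)
      ≤ ∑ t ∈ Finset.range (N + 1), ((t : ℝ) + 1) ^ (-α) := by
  have key : ∀ t ∈ Finset.range (N + 1),
      ((N : ℝ) + 1) ^ (-α) ≤ ((t : ℝ) + 1) ^ (-α) := by
    intro t ht
    have ht' : (t : ℝ) + 1 ≤ (N : ℝ) + 1 := by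
      have := Finset.mem_range.mp ht
      have : (t : ℝ) ≤ N := by exact_mod_cast Nat.lt_succ_iff.mp this
      linarith
    exact Real.rpow_le_rpow_of_nonpos (by positivity) ht' (by linarith)
  calc ((N : ℝ) + 1) ^ (1 - α)
      = (N + 1 : ℕ) • ((N : ℝ) + 1) ^ (-α) := by
        rw [nsmul_eq_mul]
        push_cast
        rw [show (1:ℝ) - α = 1 + -α by ring,
          Real.rpow_one_add' (by positivity) (by intro h; linarith)]
    _ = ∑ _t ∈ Finset.range (N + 1), ((N : ℝ) + 1) ^ (-α) := by
        rw [Finset.sum_const, Finset.card_range]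
    _ ≤ _ := Finset.sum_le_sum key

lemma T_ge (α : ℝ) (N : ℕ) :
    (1 : ℝ) ≤ ∑ t ∈ Finset.range (N + 1), ((t : ℝ) + 1) ^ (-(1 + α)) := by
  have h0 : (0 : ℕ) ∈ Finset.range (N + 1) := by simp
  have := Finset.single_le_sum
    (f := fun t : ℕ => ((t : ℝ) + 1) ^ (-(1 + α)))
    (fun t _ => by positivity) h0
  simpa using this

lemma step2 {α : ℝ} (hα0 : 0 < α) (hα1 : α ≤ 1) {k : ℝ} (hk : 1 ≤ k) :
    α * (k + 1) ^ (-(1 + α)) ≤ k ^ (-α) - (k + 1) ^ (-α) := by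
  have hk0 : (0:ℝ) < k := by linarith
  have hk1 : (0:ℝ) < k + 1 := by linarith
  have hs : (-1 : ℝ) ≤ -(1 / (k + 1)) := by
    rw [neg_le_neg_iff, div_le_one hk1]; linarith
  have hb := rpow_one_add_le_one_add_mul_self hs hα0.le hα1
  have he : (1 : ℝ) + -(1 / (k + 1)) = k / (k + 1) := by field_simp; ring
  rw [he, Real.div_rpow hk0.le hk1.le,
    show (1:ℝ) + α * -(1 / (k + 1)) = 1 - α / (k + 1) by ring] at hb
  have ha : (0:ℝ) < k ^ α := rpow_pos_of_pos hk0 α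
  have hbpos : (0:ℝ) < (k + 1) ^ α := rpow_pos_of_pos hk1 α
  have hab : k ^ α ≤ (k + 1) ^ α := Real.rpow_le_rpow hk0.le (by linarith) hα0.le
  have e1 : k ^ (-α) = (k ^ α)⁻¹ := by rw [Real.rpow_neg hk0.le]
  have e2 : (k + 1) ^ (-α) = ((k + 1) ^ α)⁻¹ := by rw [Real.rpow_neg hk1.le]
  have e3 : (k + 1) ^ (-(1 + α)) = ((k + 1) ^ α)⁻¹ * (k + 1)⁻¹ := by
    rw [show -(1 + α) = -α + -1 by ring, Real.rpow_add hk1, Real.rpow_neg hk1.le,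
      Real.rpow_neg_one]
  rw [e1, e2, e3]
  -- hb : k^α/(k+1)^α ≤ 1 - α/(k+1)
  have hb' : k ^ α * (k + 1) ≤ (k + 1) ^ α * (k + 1) - α * (k + 1) ^ α := by
    rw [div_le_iff₀ hbpos] at hb
    have h := mul_le_mul_of_nonneg_right hb hk1.le
    calc k ^ α * (k + 1) ≤ (1 - α / (k + 1)) * (k + 1) ^ α * (k + 1) := h
      _ = (k + 1) ^ α * (k + 1) - α * (k + 1) ^ α := by field_simp
  rw [← sub_nonneg]
  have expand : (k ^ α)⁻¹ - ((k + 1) ^ α)⁻¹ - α * (((k + 1) ^ α)⁻¹ * (k + 1)⁻¹)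
      = ((k + 1) ^ α * (k + 1) - k ^ α * (k + 1) - α * k ^ α)
        / (k ^ α * (k + 1) ^ α * (k + 1)) := by
    field_simp
  rw [expand]
  apply div_nonneg _ (by positivity)
  nlinarith

lemma T_le {α : ℝ} (hα0 : 0 < α) (hα1 : α ≤ 1) (N : ℕ) :
    ∑ t ∈ Finset.range (N + 1), ((t : ℝ) + 1) ^ (-(1 + α)) ≤ 1 + 1 / α := by
  rw [Finset.sum_range_succ' (fun t : ℕ => ((t : ℝ) + 1) ^ (-(1 + α)))]
  have h0 : (((0:ℕ) : ℝ) + 1) ^ (-(1 + α)) = 1 := by norm_num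
  rw [h0]
  have key : ∀ t : ℕ, (((t + 1 : ℕ) : ℝ) + 1) ^ (-(1 + α))
      ≤ ((((t : ℝ) + 1) ^ (-α)) - (((t : ℝ) + 1) + 1) ^ (-α)) / α := by
    intro t
    have := step2 hα0 hα1 (k := (t : ℝ) + 1) (by push_cast; linarith [Nat.cast_nonneg (α := ℝ) t])
    rw [le_div_iff₀ hα0]
    push_cast
    nlinarith
  have hsum : ∑ t ∈ Finset.range N, (((t + 1 : ℕ) : ℝ) + 1) ^ (-(1 + α))
      ≤ ∑ t ∈ Finset.range N,
          (((((t : ℝ) + 1) ^ (-α)) - (((t : ℝ) + 1) + 1) ^ (-α)) / α) :=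
    Finset.sum_le_sum fun t _ => key t
  have htel : ∑ t ∈ Finset.range N,
        (((((t : ℝ) + 1) ^ (-α)) - (((t : ℝ) + 1) + 1) ^ (-α)) / α)
      = (((0 : ℝ) + 1) ^ (-α) - ((N : ℝ) + 1) ^ (-α)) / α := by
    rw [← Finset.sum_div]
    congr 1
    have := Finset.sum_range_sub (fun i : ℕ => -(((i : ℝ) + 1) ^ (-α))) N
    have h2 : ∀ t : ℕ, (((t : ℝ) + 1) ^ (-α)) - (((t : ℝ) + 1) + 1) ^ (-α)
        = (fun i : ℕ => -(((i : ℝ) + 1) ^ (-α))) (t + 1)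
          - (fun i : ℕ => -(((i : ℝ) + 1) ^ (-α))) t := by
      intro t; push_cast; ring
    rw [Finset.sum_congr rfl fun t _ => h2 t, this]
    push_cast; ring
  have hnum : ((0 : ℝ) + 1) ^ (-α) - ((N : ℝ) + 1) ^ (-α) ≤ 1 := by
    have h1 : ((0 : ℝ) + 1) ^ (-α) = 1 := by norm_num
    have h2 : (0:ℝ) ≤ ((N : ℝ) + 1) ^ (-α) := by positivity
    linarith
  have hlast : (((0 : ℝ) + 1) ^ (-α) - ((N : ℝ) + 1) ^ (-α)) / α ≤ 1 / α := by
    gcongr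
  rw [htel] at hsum
  linarith

/-- For `α ∈ (0, 1/2)`, the μ-expectation of the classical query cost
`N/(|X|+1)` is `Θ(N^α)`. -/
theorem average_classical_or_cost_theta
    (α : ℝ) (hα0 : 0 < α) (hα1 : α < 1 / 2) :
    ∃ c₁ > (0 : ℝ), ∃ c₂ > (0 : ℝ), ∀ N : ℕ, 1 ≤ N → ∀ c : ℝ,
      (∑ X : Fin N → Bool, muDist α c X = 1) →
      c₁ * (N : ℝ) ^ α ≤
          (∑ X : Fin N → Bool,
            muDist α c X * ((N : ℝ) / ((hammingWt X : ℝ) + 1))) ∧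
        (∑ X : Fin N → Bool,
            muDist α c X * ((N : ℝ) / ((hammingWt X : ℝ) + 1)))
          ≤ c₂ * (N : ℝ) ^ α := by
  have hα1' : α < 1 := by linarith
  refine ⟨(1 - α) / 2, by linarith, 1 + 1 / α, by positivity, ?_⟩
  intro N hN c hnorm
  have hNpos : (0 : ℝ) < N := by exact_mod_cast hN
  set D : ℝ := ((N : ℝ) + 1) ^ (1 - α) with hDdef
  have hD : 0 < D := by positivity
  set S : ℝ := ∑ t ∈ Finset.range (N + 1), ((t : ℝ) + 1) ^ (-α) with hSdef
  set T : ℝ := ∑ t ∈ Finset.range (N + 1), ((t : ℝ) + 1) ^ (-(1 + α)) with hTdef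
  have hSD : D ≤ S := S_ge hα0 hα1' N
  have hS : 0 < S := lt_of_lt_of_le hD hSD
  have hSle : S ≤ D / (1 - α) := S_le hα0 hα1' N
  have hT1 : (1 : ℝ) ≤ T := T_ge α N
  have hT2 : T ≤ 1 + 1 / α := T_le hα0 hα1'.le N
  -- rewrite normalization
  have hnorm' : c * S / D = 1 := by
    have h1 : (∑ X : Fin N → Bool, muDist α c X)
        = ∑ t ∈ Finset.range (N + 1), (N.choose t : ℝ)
            * (c / ((N.choose t : ℝ) * ((t : ℝ) + 1) ^ α * D)) :=
      sum_by_weight N (fun t : ℕ => c / ((N.choose t : ℝ) * ((t : ℝ) + 1) ^ α * D))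
    rw [← hnorm, h1, hSdef, Finset.mul_sum, Finset.sum_div]
    refine Finset.sum_congr rfl fun t ht => ?_
    have hch : (0 : ℝ) < (N.choose t : ℝ) := by
      exact_mod_cast Nat.choose_pos (Nat.lt_succ_iff.mp (Finset.mem_range.mp ht))
    have ht1 : (0 : ℝ) < (t : ℝ) + 1 := by positivity
    have hta : (0 : ℝ) < ((t : ℝ) + 1) ^ α := rpow_pos_of_pos ht1 α
    rw [Real.rpow_neg ht1.le]
    field_simp
  have hcS : c * S = D := by
    rwa [div_eq_one_iff_eq hD.ne'] at hnorm'
  have hc : c = D / S := by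
    rw [eq_div_iff hS.ne']; exact hcS
  have hcpos : 0 < c := by rw [hc]; positivity
  -- rewrite expectation
  have hE : (∑ X : Fin N → Bool,
        muDist α c X * ((N : ℝ) / ((hammingWt X : ℝ) + 1))) = c * (N : ℝ) * T / D := by
    have h2 : (∑ X : Fin N → Bool,
          muDist α c X * ((N : ℝ) / ((hammingWt X : ℝ) + 1)))
        = ∑ t ∈ Finset.range (N + 1), (N.choose t : ℝ)
            * (c / ((N.choose t : ℝ) * ((t : ℝ) + 1) ^ α * D)
              * ((N : ℝ) / ((t : ℝ) + 1))) :=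
      sum_by_weight N (fun t : ℕ => c / ((N.choose t : ℝ) * ((t : ℝ) + 1) ^ α * D)
        * ((N : ℝ) / ((t : ℝ) + 1)))
    rw [h2, hTdef, Finset.mul_sum, Finset.sum_div]
    refine Finset.sum_congr rfl fun t ht => ?_
    have hch : (0 : ℝ) < (N.choose t : ℝ) := by
      exact_mod_cast Nat.choose_pos (Nat.lt_succ_iff.mp (Finset.mem_range.mp ht))
    have ht1 : (0 : ℝ) < (t : ℝ) + 1 := by positivity
    have hta : (0 : ℝ) < ((t : ℝ) + 1) ^ α := rpow_pos_of_pos ht1 α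
    have e : ((t : ℝ) + 1) ^ (-(1 + α)) = (((t : ℝ) + 1) * ((t : ℝ) + 1) ^ α)⁻¹ := by
      rw [Real.rpow_neg ht1.le, Real.rpow_add ht1, Real.rpow_one]
    rw [e]
    field_simp
  rw [hE]
  -- key numeric facts
  have hsplit : (N : ℝ) = (N : ℝ) ^ α * (N : ℝ) ^ (1 - α) := by
    rw [← Real.rpow_add hNpos, show α + (1 - α) = 1 by ring, Real.rpow_one]
  have hNα : (0 : ℝ) < (N : ℝ) ^ α := by positivity
  have hc1 : c ≤ 1 := by rw [hc]; exact (div_le_one hS).mpr hSD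
  have hc2 : 1 - α ≤ c := by
    rw [hc, le_div_iff₀ hS]
    rw [le_div_iff₀ (by linarith : (0:ℝ) < 1 - α)] at hSle
    calc (1 - α) * S = S * (1 - α) := mul_comm _ _
      _ ≤ D := hSle
  have hND : (N : ℝ) / D ≤ (N : ℝ) ^ α := by
    rw [div_le_iff₀ hD]
    calc (N : ℝ) = (N : ℝ) ^ α * (N : ℝ) ^ (1 - α) := hsplit
      _ ≤ (N : ℝ) ^ α * D := by
          apply mul_le_mul_of_nonneg_left _ hNα.le
          exact Real.rpow_le_rpow hNpos.le (by linarith) (by linarith)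
  have hD2 : D ≤ 2 * (N : ℝ) ^ (1 - α) := by
    have hN2 : (N : ℝ) + 1 ≤ 2 * N := by
      have : (1 : ℝ) ≤ N := by exact_mod_cast hN
      linarith
    calc D ≤ ((2 * N : ℝ)) ^ (1 - α) :=
        Real.rpow_le_rpow (by positivity) hN2 (by linarith)
      _ = (2 : ℝ) ^ (1 - α) * (N : ℝ) ^ (1 - α) :=
        Real.mul_rpow (by norm_num) hNpos.le
      _ ≤ 2 * (N : ℝ) ^ (1 - α) := by
        apply mul_le_mul_of_nonneg_right _ (by positivity)
        calc (2 : ℝ) ^ (1 - α) ≤ (2 : ℝ) ^ (1 : ℝ) :=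
            Real.rpow_le_rpow_of_exponent_le one_le_two (by linarith)
          _ = 2 := Real.rpow_one 2
  have hND2 : (N : ℝ) ^ α / 2 ≤ (N : ℝ) / D := by
    rw [div_le_div_iff₀ (by norm_num) hD]
    calc (N : ℝ) ^ α * D ≤ (N : ℝ) ^ α * (2 * (N : ℝ) ^ (1 - α)) :=
        mul_le_mul_of_nonneg_left hD2 hNα.le
      _ = (N : ℝ) * 2 := by
          rw [show (N : ℝ) ^ α * (2 * (N : ℝ) ^ (1 - α))
            = 2 * ((N : ℝ) ^ α * (N : ℝ) ^ (1 - α)) by ring, ← hsplit]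
          ring
  have hEeq : c * (N : ℝ) * T / D = (c * T) * ((N : ℝ) / D) := by ring
  rw [hEeq]
  constructor
  · have hc2' : 1 - α ≤ c * T := by
      calc (1 : ℝ) - α ≤ c := hc2
        _ = c * 1 := (mul_one c).symm
        _ ≤ c * T := mul_le_mul_of_nonneg_left hT1 hcpos.le
    calc (1 - α) / 2 * (N : ℝ) ^ α = (1 - α) * ((N : ℝ) ^ α / 2) := by ring
      _ ≤ (c * T) * ((N : ℝ) / D) :=
        mul_le_mul hc2' hND2 (by positivity) (by linarith)
  · have hc1' : c * T ≤ 1 + 1 / α := by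
      calc c * T ≤ 1 * T := mul_le_mul_of_nonneg_right hc1 (by linarith)
        _ = T := one_mul T
        _ ≤ 1 + 1 / α := hT2
    calc (c * T) * ((N : ℝ) / D) ≤ (1 + 1 / α) * (N : ℝ) ^ α :=
        mul_le_mul hc1' hND (by positivity) (by positivity)
end

section
/- Fix α ∈ (0, 1/2). There exist constants c_1, c_2 > 0 (depending only on α) such that for every N ≥ 1, the μ-expectation of the quantum query cost √(N/(|X|+1)) satisfies c_1 ≤ Σ_{X ∈ {0,1}^N} μ(X)·√(N/(|X|+1)) ≤ c_2. -/
open Finset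

def boolEquiv (N : ℕ) : (Fin N → Bool) ≃ Finset (Fin N) where
  toFun X := Finset.univ.filter (fun i => X i = true)
  invFun S := fun i => i ∈ S
  left_inv X := by funext i; simp
  right_inv S := by ext i; simp

lemma sum_hamming {M : Type*} [AddCommMonoid M] (N : ℕ) (f : ℕ → M) :
    ∑ X : Fin N → Bool, f (hammingWt X)
      = ∑ t ∈ range (N + 1), N.choose t • f t := by
  rw [← Equiv.sum_comp (boolEquiv N).symm (fun X => f (hammingWt X))]
  have h : ∀ S : Finset (Fin N), hammingWt ((boolEquiv N).symm S) = S.card := by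
    intro S
    simp [hammingWt, boolEquiv]
  simp_rw [h]
  rw [← Finset.powerset_univ, Finset.sum_powerset_apply_card]
  simp

lemma bern (p : ℝ) (hp0 : 0 ≤ p) (hp1 : p ≤ 1) (n : ℕ) :
    (n : ℝ) ^ p ≤ ((n : ℝ) + 1) ^ p - p * ((n : ℝ) + 1) ^ (p - 1) := by
  have hn1 : (0:ℝ) < (n:ℝ) + 1 := by positivity
  have hs : (-1 : ℝ) ≤ -(1 / ((n:ℝ) + 1)) := by
    rw [neg_le_neg_iff]
    rw [div_le_one hn1]
    linarith
  have key := rpow_one_add_le_one_add_mul_self hs hp0 hp1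
  have hrw : (n : ℝ) = ((n:ℝ) + 1) * (1 + -(1 / ((n:ℝ)+1))) := by
    field_simp
    ring
  calc (n:ℝ) ^ p = (((n:ℝ) + 1) * (1 + -(1 / ((n:ℝ)+1)))) ^ p := by rw [← hrw]
    _ = ((n:ℝ) + 1) ^ p * (1 + -(1 / ((n:ℝ)+1))) ^ p := by
        rw [Real.mul_rpow hn1.le (by linarith)]
    _ ≤ ((n:ℝ) + 1) ^ p * (1 + p * -(1 / ((n:ℝ)+1))) := by
        apply mul_le_mul_of_nonneg_left key (by positivity)
    _ = ((n:ℝ) + 1) ^ p - p * (((n:ℝ) + 1) ^ p * ((n:ℝ)+1)⁻¹) := by ring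
    _ = ((n:ℝ) + 1) ^ p - p * ((n:ℝ) + 1) ^ (p - 1) := by
        rw [Real.rpow_sub hn1, Real.rpow_one]
        ring

lemma sum_rpow_le (β : ℝ) (hb0 : 0 ≤ β) (hb1 : β < 1) (N : ℕ) :
    ∑ t ∈ range (N + 1), ((t : ℝ) + 1) ^ (-β) ≤ ((N : ℝ) + 1) ^ (1 - β) / (1 - β) := by
  have h1b : (0:ℝ) < 1 - β := by linarith
  rw [le_div_iff₀ h1b, Finset.sum_mul]
  have step : ∀ t ∈ range (N+1), ((t:ℝ)+1)^(-β) * (1-β)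
      ≤ (((t:ℝ)+1) ^ (1-β) - (t:ℝ) ^ (1-β)) := by
    intro t _
    have := bern (1-β) h1b.le (by linarith) t
    have hrw : ((t:ℝ)+1) ^ (1-β-1) = ((t:ℝ)+1)^(-β) := by norm_num
    rw [hrw] at this
    linarith
  calc ∑ t ∈ range (N+1), ((t:ℝ)+1)^(-β) * (1-β)
      ≤ ∑ t ∈ range (N+1), (((t:ℝ)+1) ^ (1-β) - (t:ℝ) ^ (1-β)) :=
        Finset.sum_le_sum step
    _ = ((N:ℝ)+1) ^ (1-β) - (0:ℝ) ^ (1-β) := by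
        have := Finset.sum_range_sub (fun t : ℕ => (t:ℝ) ^ (1-β)) (N+1)
        simpa using this
    _ ≤ ((N:ℝ)+1) ^ (1-β) := by
        rw [Real.zero_rpow (by linarith)]; simp

lemma sum_rpow_ge (β : ℝ) (hb0 : 0 ≤ β) (N : ℕ) :
    ((N : ℝ) + 1) ^ (1 - β) ≤ ∑ t ∈ range (N + 1), ((t : ℝ) + 1) ^ (-β) := by
  have hN1 : (0:ℝ) < (N:ℝ) + 1 := by positivity
  have step : ∀ t ∈ range (N+1), ((N:ℝ)+1)^(-β) ≤ ((t:ℝ)+1)^(-β) := by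
    intro t ht
    apply Real.rpow_le_rpow_of_nonpos (by positivity) _ (by linarith)
    have := mem_range.mp ht
    have : (t:ℝ) ≤ (N:ℝ) := by exact_mod_cast Nat.lt_succ_iff.mp this
    linarith
  calc ((N:ℝ)+1) ^ (1-β) = ((N:ℝ)+1) ^ (1:ℝ) * ((N:ℝ)+1) ^ (-β) := by
        rw [← Real.rpow_add hN1]; ring_nf
    _ = ∑ _t ∈ range (N+1), ((N:ℝ)+1)^(-β) := by
        rw [Real.rpow_one, Finset.sum_const, card_range]
        ring
    _ ≤ _ := Finset.sum_le_sum step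

/-- For `α ∈ (0, 1/2)`, the μ-expectation of the quantum query cost
`√(N/(|X|+1))` is `Θ(1)`. -/
theorem average_quantum_or_cost_theta
    (α : ℝ) (hα0 : 0 < α) (hα1 : α < 1 / 2) :
    ∃ c₁ > (0 : ℝ), ∃ c₂ > (0 : ℝ), ∀ N : ℕ, 1 ≤ N → ∀ c : ℝ,
      (∑ X : Fin N → Bool, muDist α c X = 1) →
      c₁ ≤ (∑ X : Fin N → Bool,
              muDist α c X * Real.sqrt ((N : ℝ) / ((hammingWt X : ℝ) + 1))) ∧
        (∑ X : Fin N → Bool,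
            muDist α c X * Real.sqrt ((N : ℝ) / ((hammingWt X : ℝ) + 1)))
          ≤ c₂ := by
  have hhalf : (0:ℝ) < 1/2 - α := by linarith
  refine ⟨1/4, by norm_num, 1/(1/2 - α), by positivity, fun N hN c hsum => ?_⟩
  have hN1 : (0:ℝ) < (N:ℝ) + 1 := by positivity
  have hNpos : (0:ℝ) < (N:ℝ) := by exact_mod_cast hN
  set v : ℝ := ((N:ℝ) + 1) ^ (1 - α) with hv_def
  have hv : 0 < v := Real.rpow_pos_of_pos hN1 _
  set A : ℝ := ∑ t ∈ range (N+1), ((t:ℝ)+1) ^ (-(α + 1/2)) with hA_def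
  set B : ℝ := ∑ t ∈ range (N+1), ((t:ℝ)+1) ^ (-α) with hB_def
  have hApos : 0 < A := by
    apply Finset.sum_pos (fun t _ => Real.rpow_pos_of_pos (by positivity) _)
    exact nonempty_range_add_one
  have hBpos : 0 < B := by
    apply Finset.sum_pos (fun t _ => Real.rpow_pos_of_pos (by positivity) _)
    exact nonempty_range_add_one
  -- rewrite the normalization sum
  have key1 := sum_hamming (M := ℝ) N
    (fun t : ℕ => c / ((N.choose t : ℝ) * ((t:ℝ) + 1) ^ α * v))
  have hsum' : c * v⁻¹ * B = 1 := by
    rw [← hsum]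
    rw [show (∑ X : Fin N → Bool, muDist α c X)
        = ∑ X : Fin N → Bool, (fun t : ℕ => c / ((N.choose t : ℝ) * ((t:ℝ) + 1) ^ α * v))
            (hammingWt X) from rfl]
    rw [key1, hB_def, Finset.mul_sum]
    apply Finset.sum_congr rfl
    intro t ht
    have hch : (0:ℝ) < (N.choose t : ℝ) := by
      exact_mod_cast Nat.choose_pos (Nat.lt_succ_iff.mp (mem_range.mp ht))
    have ht1 : (0:ℝ) < (t:ℝ) + 1 := by positivity
    have htp : (0:ℝ) < ((t:ℝ) + 1) ^ α := Real.rpow_pos_of_pos ht1 _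
    rw [nsmul_eq_mul, Real.rpow_neg ht1.le]
    field_simp
  have hc : c = v / B := by
    field_simp at hsum' ⊢
    linarith
  -- rewrite the expectation
  have key2 := sum_hamming (M := ℝ) N
    (fun t : ℕ => c / ((N.choose t : ℝ) * ((t:ℝ) + 1) ^ α * v)
      * Real.sqrt ((N : ℝ) / ((t:ℝ) + 1)))
  have hE : (∑ X : Fin N → Bool,
        muDist α c X * Real.sqrt ((N : ℝ) / ((hammingWt X : ℝ) + 1)))
      = Real.sqrt N * (A / B) := by
    rw [show (∑ X : Fin N → Bool,
          muDist α c X * Real.sqrt ((N : ℝ) / ((hammingWt X : ℝ) + 1)))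
        = ∑ X : Fin N → Bool, (fun t : ℕ =>
            c / ((N.choose t : ℝ) * ((t:ℝ) + 1) ^ α * v)
              * Real.sqrt ((N : ℝ) / ((t:ℝ) + 1))) (hammingWt X) from rfl]
    rw [key2]
    have hterm : ∀ t ∈ range (N+1),
        (N.choose t) • ((fun t : ℕ =>
            c / ((N.choose t : ℝ) * ((t:ℝ) + 1) ^ α * v)
              * Real.sqrt ((N : ℝ) / ((t:ℝ) + 1))) t)
        = Real.sqrt N * B⁻¹ * ((t:ℝ)+1) ^ (-(α + 1/2)) := by
      intro t ht
      have hch : (0:ℝ) < (N.choose t : ℝ) := by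
        exact_mod_cast Nat.choose_pos (Nat.lt_succ_iff.mp (mem_range.mp ht))
      have ht1 : (0:ℝ) < (t:ℝ) + 1 := by positivity
      have htp : (0:ℝ) < ((t:ℝ) + 1) ^ α := Real.rpow_pos_of_pos ht1 _
      have hth : (0:ℝ) < ((t:ℝ) + 1) ^ ((1:ℝ)/2) := Real.rpow_pos_of_pos ht1 _
      have hsq : Real.sqrt ((N : ℝ) / ((t:ℝ) + 1))
          = Real.sqrt N * (((t:ℝ)+1) ^ ((1:ℝ)/2))⁻¹ := by
        rw [Real.sqrt_div (by positivity) _, Real.sqrt_eq_rpow ((t:ℝ)+1), div_eq_mul_inv]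
      have hmul : ((t:ℝ)+1) ^ (-(α + 1/2))
          = (((t:ℝ)+1) ^ α)⁻¹ * (((t:ℝ)+1) ^ ((1:ℝ)/2))⁻¹ := by
        rw [show -(α + 1/2) = (-α) + (-(1/2)) by ring, Real.rpow_add ht1,
          Real.rpow_neg ht1.le, Real.rpow_neg ht1.le]
      simp only [nsmul_eq_mul]
      rw [hsq, hmul, hc]
      field_simp
    rw [Finset.sum_congr rfl hterm, ← Finset.mul_sum, ← hA_def]
    rw [div_eq_mul_inv]
    ring
  rw [hE]
  -- sum bounds
  have e1 : (1:ℝ) - (α + 1/2) = 1/2 - α := by ring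
  have hAle := sum_rpow_le (α + 1/2) (by linarith) (by linarith) N
  have hAge := sum_rpow_ge (α + 1/2) (by linarith) N
  have hBle := sum_rpow_le α hα0.le (by linarith) N
  have hBge := sum_rpow_ge α hα0.le N
  rw [e1] at hAle hAge
  rw [← hA_def] at hAle hAge
  rw [← hB_def, ← hv_def] at hBle hBge
  set P : ℝ := ((N:ℝ)+1) ^ ((1:ℝ)/2 - α) with hP_def
  have hP : 0 < P := Real.rpow_pos_of_pos hN1 _
  have hPv : P / v = (Real.sqrt ((N:ℝ)+1))⁻¹ := by
    rw [hP_def, hv_def, ← Real.rpow_sub hN1,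
      show ((1:ℝ)/2 - α - (1 - α)) = -(1/2) by ring,
      Real.rpow_neg hN1.le]
    congr 1
    exact (Real.sqrt_eq_rpow _).symm
  set s : ℝ := Real.sqrt ((N:ℝ)+1) with hs_def
  have hspos : 0 < s := Real.sqrt_pos.mpr hN1
  have hsqN : 0 < Real.sqrt (N:ℝ) := Real.sqrt_pos.mpr hNpos
  have hsle2 : s ≤ 2 * Real.sqrt (N:ℝ) := by
    have h2 : Real.sqrt ((N:ℝ)+1) ≤ Real.sqrt (4 * (N:ℝ)) := by
      apply Real.sqrt_le_sqrt
      have hNge1 : (1:ℝ) ≤ (N:ℝ) := by exact_mod_cast hN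
      linarith
    have h4 : Real.sqrt (4 * (N:ℝ)) = 2 * Real.sqrt (N:ℝ) := by
      rw [show (4:ℝ) * (N:ℝ) = 2^2 * (N:ℝ) by norm_num, Real.sqrt_mul (by positivity),
        Real.sqrt_sq (by norm_num)]
    rw [hs_def]
    linarith [h2, h4.le]
  have hsge : Real.sqrt (N:ℝ) ≤ s := Real.sqrt_le_sqrt (by linarith)
  have hfrac_hi : A / B ≤ s⁻¹ * (1 / (1/2 - α)) := by
    have h1 : A / B ≤ (P / (1/2 - α)) / v :=
      div_le_div₀ (by positivity) (by rwa [hP_def] at hAle ⊢) hv hBge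
    have h2 : (P / (1/2 - α)) / v = (P / v) * (1 / (1/2 - α)) := by ring
    rw [h2, hPv] at h1
    exact h1
  have hfrac_lo : (1 - α) * s⁻¹ ≤ A / B := by
    have h1 : P / (v / (1 - α)) ≤ A / B :=
      div_le_div₀ hApos.le hAge hBpos hBle
    have h2 : P / (v / (1 - α)) = (1 - α) * (P / v) := by
      field_simp
    rw [h2, hPv] at h1
    exact h1
  constructor
  · have h12 : (1:ℝ)/2 ≤ Real.sqrt (N:ℝ) * s⁻¹ := by
      rw [← div_eq_mul_inv, le_div_iff₀ hspos]
      linarith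
    calc (1/4 : ℝ) ≤ (1 - α) * (Real.sqrt (N:ℝ) * s⁻¹) := by nlinarith
      _ = Real.sqrt (N:ℝ) * ((1 - α) * s⁻¹) := by ring
      _ ≤ Real.sqrt (N:ℝ) * (A / B) :=
          mul_le_mul_of_nonneg_left hfrac_lo (Real.sqrt_nonneg _)
  · calc Real.sqrt (N:ℝ) * (A / B)
        ≤ Real.sqrt (N:ℝ) * (s⁻¹ * (1 / (1/2 - α))) :=
          mul_le_mul_of_nonneg_left hfrac_hi (Real.sqrt_nonneg _)
      _ = (Real.sqrt (N:ℝ) * s⁻¹) * (1 / (1/2 - α)) := by ring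
      _ ≤ 1 * (1 / (1/2 - α)) := by
          apply mul_le_mul_of_nonneg_right _ (by positivity)
          rw [← div_eq_mul_inv, div_le_one hspos]
          exact hsge
      _ = 1 / (1/2 - α) := one_mul _
end

section
/- There exists a constant c > 0 such that for all n ≥ 1, letting V = (ZMod 2)^n, the number of functions x : V → V for which fewer than 2^n/8 elements j ∈ V have exactly one preimage under x (i.e., |{j ∈ V : there is exactly one i with x(i) = j}| < 2^n/8) is at most 2^{−c·2^n}·(2^n)^{2^n}. -/
open Finset Nat

section Aux
variable {α : Type*} [Fintype α] [DecidableEq α]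

variable {α : Type*} [Fintype α] [DecidableEq α]

def fcnt (x : α → α) (j : α) : ℕ := #{i | x i = j}

lemma card_fiber (x : α → α) (j : α) : Fintype.card {i // x i = j} = fcnt x j :=
  Fintype.card_subtype _

lemma card_fiber_mul_le (x0 : α → α) :
    #{x : α → α | ∀ j, fcnt x j = fcnt x0 j} * ∏ j, (fcnt x0 j)! ≤ (Fintype.card α)! := by
  classical
  -- the sigma type
  set S : Type _ := {x : α → α // ∀ j, fcnt x j = fcnt x0 j} with hS
  set T : Type _ := Σ x : S, ∀ j, Equiv.Perm {i // x.1 i = j} with hT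
  have hgx : ∀ x : S, ∀ j, Fintype.card {i // x.1 i = j} = Fintype.card {i // x0 i = j} := by
    intro x j; rw [card_fiber, card_fiber, x.2 j]
  -- injection into permutations
  let σ : S → Equiv.Perm α := fun x =>
    Equiv.ofFiberEquiv (fun j => Fintype.equivOfCardEq (hgx x j))
  let Ψ : T → Equiv.Perm α := fun t => (Equiv.ofFiberEquiv t.2).trans (σ t.1)
  have hσ : ∀ (x : S) (i : α), x0 (σ x i) = x.1 i := fun x i => Equiv.ofFiberEquiv_map _ i
  have hglue : ∀ (t : T) (i : α), t.1.1 (Equiv.ofFiberEquiv t.2 i) = t.1.1 i :=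
    fun t i => Equiv.ofFiberEquiv_map _ i
  have hΨval : ∀ (t : T) (i : α), x0 (Ψ t i) = t.1.1 i := by
    intro t i
    show x0 (σ t.1 (Equiv.ofFiberEquiv t.2 i)) = _
    rw [hσ, hglue]
  have hinj : Function.Injective Ψ := by
    rintro ⟨x, e⟩ ⟨y, f⟩ h
    have hxy : x = y := by
      apply Subtype.ext; funext i
      have h1 := hΨval ⟨x, e⟩ i
      have h2 := hΨval ⟨y, f⟩ i
      rw [← h1, ← h2, h]
    subst hxy
    have hef : Equiv.ofFiberEquiv e = Equiv.ofFiberEquiv f := by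
      have : ∀ i, σ x (Equiv.ofFiberEquiv e i) = σ x (Equiv.ofFiberEquiv f i) := by
        intro i; exact DFunLike.congr_fun h i
      apply Equiv.ext; intro i
      exact (σ x).injective (this i)
    congr 1
    funext j; apply Equiv.ext; rintro ⟨i, rfl⟩
    have := DFunLike.congr_fun hef i
    simp only [Equiv.ofFiberEquiv_apply] at this
    exact Subtype.ext this
  have := Fintype.card_le_of_injective Ψ hinj
  rw [Fintype.card_perm] at this
  calc #{x : α → α | ∀ j, fcnt x j = fcnt x0 j} * ∏ j, (fcnt x0 j)!
      = Fintype.card T := by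
        rw [Fintype.card_sigma]
        have : ∀ x : S, Fintype.card (∀ j, Equiv.Perm {i // x.1 i = j})
            = ∏ j, (fcnt x0 j)! := by
          intro x
          rw [Fintype.card_pi]
          exact Finset.prod_congr rfl fun j _ => by
            rw [Fintype.card_perm, card_fiber, x.2 j]
        rw [Finset.sum_congr rfl fun x _ => this x, Finset.sum_const, smul_eq_mul,
          Finset.card_univ, Fintype.card_subtype]
    _ ≤ (Fintype.card α)! := this

lemma sum_pow_unique_le (u : ℝ) (hu0 : 0 ≤ u) :
    ∑ x : α → α, u ^ Nat.card {j // ∃! i, x i = j} ≤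
      ((Fintype.card α)! : ℝ) *
        (∑ m ∈ range (Fintype.card α + 1), (if m = 1 then u else 1) / m !) ^ Fintype.card α := by
  classical
  set N := Fintype.card α with hN
  -- step 1 : rewrite each term as a product over values
  have step1 : ∀ x : α → α, u ^ Nat.card {j // ∃! i, x i = j}
      = ∏ j, (if fcnt x j = 1 then u else 1) := by
    intro x
    have h1 : ∀ j, (∃! i, x i = j) ↔ fcnt x j = 1 := fun j => by
      rw [fcnt]; exact Fintype.existsUnique_iff_card_one _
    have h2 : Nat.card {j // ∃! i, x i = j} = ∑ j, if fcnt x j = 1 then 1 else 0 := by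
      rw [Nat.card_eq_fintype_card, Fintype.card_subtype, Finset.filter_congr (fun j _ => h1 j),
        Finset.card_filter]
    rw [h2, ← Finset.prod_pow_eq_pow_sum]
    exact Finset.prod_congr rfl fun j _ => by split <;> simp
  rw [Finset.sum_congr rfl fun x _ => step1 x]
  -- step 2 : group by the fiber-count vector
  set B := Fintype.piFinset (fun _ : α => range (N + 1)) with hB
  have hmaps : ∀ x : α → α, x ∈ (univ : Finset (α → α)) → fcnt x ∈ B := by
    intro x _
    rw [hB, Fintype.mem_piFinset]
    intro j
    rw [Finset.mem_range, Nat.lt_succ_iff, hN]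
    simpa [fcnt] using (Finset.card_filter_le univ (fun i => x i = j)).trans_eq (by simp)
  rw [← Finset.sum_fiberwise_of_maps_to hmaps (fun x => ∏ j, (if fcnt x j = 1 then u else 1))]
  -- step 3 : bound each class
  have step3 : ∀ c ∈ B, ∑ x ∈ univ.filter (fun x : α → α => fcnt x = c),
      (∏ j, (if fcnt x j = 1 then u else 1)) ≤
      ((N ! : ℝ) / ∏ j, ((c j)! : ℝ)) * ∏ j, (if c j = 1 then u else 1) := by
    intro c _
    have hprodpos : (0:ℝ) < ∏ j, ((c j)! : ℝ) := by
      apply Finset.prod_pos; intro j _; exact_mod_cast Nat.factorial_pos _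
    have hval : ∀ x ∈ univ.filter (fun x : α → α => fcnt x = c),
        (∏ j, (if fcnt x j = 1 then u else 1)) = ∏ j, (if c j = 1 then u else 1) := by
      intro x hx
      rw [Finset.mem_filter] at hx
      rw [hx.2]
    rw [Finset.sum_congr rfl hval, Finset.sum_const, nsmul_eq_mul]
    have hG : (0:ℝ) ≤ ∏ j, (if c j = 1 then u else 1) :=
      Finset.prod_nonneg fun j _ =>
        (by split <;> first | exact hu0 | exact zero_le_one)
    apply mul_le_mul_of_nonneg_right _ hG
    -- cardinality bound
    rcases Finset.eq_empty_or_nonempty (univ.filter (fun x : α → α => fcnt x = c)) with he | ⟨x0, hx0⟩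
    · rw [he]; simp; positivity
    · rw [Finset.mem_filter] at hx0
      have hc : c = fcnt x0 := hx0.2.symm
      subst hc
      rw [le_div_iff₀ hprodpos]
      have := card_fiber_mul_le x0
      have hcast := (Nat.cast_le (α := ℝ)).mpr this
      push_cast at hcast
      have hfe : (filter (fun x : α → α => fcnt x = fcnt x0) univ)
          = (filter (fun x : α → α => ∀ j, fcnt x j = fcnt x0 j) univ) :=
        Finset.filter_congr fun x _ => funext_iff
      rw [hfe, hN]
      exact hcast
  refine le_trans (Finset.sum_le_sum step3) ?_
  -- step 4 : factor the sum of products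
  have : ∀ c ∈ B, ((N ! : ℝ) / ∏ j, ((c j)! : ℝ)) * ∏ j, (if c j = 1 then u else 1)
      = (N ! : ℝ) * ∏ j, ((if c j = 1 then u else 1) / (c j)!) := by
    intro c _
    rw [Finset.prod_div_distrib]; ring
  rw [Finset.sum_congr rfl this, ← Finset.mul_sum]
  apply mul_le_mul_of_nonneg_left _ (by positivity)
  rw [hB, ← Finset.prod_univ_sum (fun _ : α => range (N + 1))
    (fun _ m => (if m = 1 then u else 1) / (m ! : ℝ))]
  rw [Finset.prod_const, Finset.card_univ, ← hN]

end Aux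

section Aux2


lemma exp_le_ratio (m : ℕ) : Real.exp 1 ≤ ((m+2:ℝ)/(m+1)) ^ (m+2) := by
  have h0 : (0:ℝ) < m + 2 := by positivity
  have h1 : (0:ℝ) < m + 1 := by positivity
  have key : Real.exp (1/(m+2)) ≤ (m+2:ℝ)/(m+1) := by
    have h := Real.add_one_le_exp (-(1/(m+2:ℝ)))
    rw [Real.exp_neg] at h
    have hfrac : (-(1/(m+2:ℝ)) + 1) = (m+1)/(m+2) := by field_simp; ring
    rw [hfrac] at h
    have h2 := inv_anti₀ (by positivity) h
    rwa [inv_inv, inv_div] at h2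
  calc Real.exp 1 = Real.exp (1/(m+2)) ^ (m+2) := by
        rw [← Real.exp_nat_mul]; push_cast; field_simp
    _ ≤ ((m+2:ℝ)/(m+1)) ^ (m+2) :=
        pow_le_pow_left₀ (Real.exp_pos _).le key _

lemma factorial_mul_exp_le (N : ℕ) : (N ! : ℝ) * Real.exp 1 ^ N ≤ (N+1:ℝ) ^ (N+1) := by
  induction N with
  | zero => simp
  | succ m ih =>
      have h1 : (0:ℝ) < m + 1 := by positivity
      have key := exp_le_ratio m
      have hstep : ((m+1:ℕ)! : ℝ) * Real.exp 1 ^ (m+1)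
          = (m+1:ℝ) * Real.exp 1 * ((m ! : ℝ) * Real.exp 1 ^ m) := by
        push_cast [Nat.factorial_succ]; ring
      rw [hstep]
      have h2 : (m+1:ℝ) * Real.exp 1 * ((m ! : ℝ) * Real.exp 1 ^ m)
          ≤ (m+1:ℝ) * Real.exp 1 * (m+1:ℝ)^(m+1) := by
        apply mul_le_mul_of_nonneg_left ih (by positivity)
      refine h2.trans ?_
      have h3 : (m+1:ℝ) * Real.exp 1 * (m+1:ℝ)^(m+1)
          ≤ (m+1:ℝ)^(m+2) * (((m+2:ℝ)/(m+1)) ^ (m+2)) := by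
        calc (m+1:ℝ) * Real.exp 1 * (m+1:ℝ)^(m+1)
            = (m+1:ℝ)^(m+2) * Real.exp 1 := by ring
          _ ≤ (m+1:ℝ)^(m+2) * (((m+2:ℝ)/(m+1)) ^ (m+2)) :=
              mul_le_mul_of_nonneg_left key (by positivity)
      refine h3.trans ?_
      have h4 : (m+1:ℝ)^(m+2) * (((m+2:ℝ)/(m+1))^(m+2)) = (m+2:ℝ)^(m+2) := by
        rw [div_pow]; field_simp
      rw [h4]
      push_cast
      rw [show (m:ℝ)+1+1 = (m:ℝ)+2 by ring]

lemma succ_pow_le (N : ℕ) (hN : 1 ≤ N) : (N+1:ℝ) ^ (N+1) ≤ Real.exp 1 * (N+1) * (N:ℝ)^N := by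
  have h0 : (0:ℝ) < N := by exact_mod_cast hN
  have key : ((N+1:ℝ)/N) ^ N ≤ Real.exp 1 := by
    have h1 : (N+1:ℝ)/N ≤ Real.exp (1/N) := by
      have h := Real.add_one_le_exp (1/(N:ℝ))
      have e1 : (1/(N:ℝ))*N = 1 := by field_simp
      rw [div_le_iff₀ h0]
      nlinarith [mul_le_mul_of_nonneg_right h h0.le]
    calc ((N+1:ℝ)/N) ^ N ≤ Real.exp (1/N) ^ N :=
          pow_le_pow_left₀ (by positivity) h1 _
      _ = Real.exp 1 := by rw [← Real.exp_nat_mul]; field_simp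
  have : (N+1:ℝ)^(N+1) = (N+1:ℝ) * (((N+1:ℝ)/N)^N * (N:ℝ)^N) := by
    rw [div_pow, div_mul_cancel₀]
    · ring
    · positivity
  rw [this]
  calc (N+1:ℝ) * (((N+1:ℝ)/N)^N * (N:ℝ)^N)
      ≤ (N+1:ℝ) * (Real.exp 1 * (N:ℝ)^N) := by
        apply mul_le_mul_of_nonneg_left _ (by positivity)
        exact mul_le_mul_of_nonneg_right key (by positivity)
    _ = Real.exp 1 * (N+1) * (N:ℝ)^N := by ring

lemma growth_le (N : ℕ) (hN : 64 ≤ N) : Real.exp 1 * (N+1) ≤ (23/20:ℝ) ^ N := by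
  induction N, hN using Nat.le_induction with
  | base =>
      have h1 := Real.exp_one_lt_d9
      have h2 : (177:ℝ) ≤ (23/20:ℝ)^64 := by norm_num
      push_cast
      nlinarith
  | succ m hm ih =>
      have he : (1:ℝ) ≤ Real.exp 1 := by
        have := Real.add_one_le_exp (1:ℝ); linarith
      have hm' : (64:ℝ) ≤ m := by exact_mod_cast hm
      push_cast
      rw [pow_succ]
      nlinarith [Real.exp_pos 1]

section Aux3
variable {α : Type*} [Fintype α] [DecidableEq α]
lemma bad_count_le (N : ℕ) (hN : 64 ≤ N) (hcard : Fintype.card α = N) :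
    (Nat.card {x : α → α // (Nat.card {j // ∃! i, x i = j} : ℝ) < (N:ℝ) / 8} : ℝ)
      ≤ (2:ℝ) ^ (-(N:ℝ)/100) * (N:ℝ) ^ N := by
  classical
  have hN1 : 1 ≤ N := le_trans (by norm_num) hN
  have hNR : (0:ℝ) < N := by exact_mod_cast hN1
  set P : (α → α) → Prop := fun x => (Nat.card {j // ∃! i, x i = j} : ℝ) < (N:ℝ) / 8 with hP
  -- step 1: bad count * (1/4)^(N/8) ≤ full sum
  have step1 : (Nat.card {x : α → α // P x} : ℝ) * (1/4:ℝ) ^ ((N:ℝ)/8)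
      ≤ ∑ x : α → α, (1/4:ℝ) ^ Nat.card {j // ∃! i, x i = j} := by
    have hsub : (Nat.card {x : α → α // P x} : ℝ) = #{x : α → α | P x} := by
      rw [Nat.card_eq_fintype_card, Fintype.card_subtype]
    rw [hsub, ← nsmul_eq_mul, ← Finset.sum_const]
    refine le_trans (Finset.sum_le_sum ?_) (Finset.sum_le_sum_of_subset_of_nonneg
      (Finset.subset_univ _) (fun x _ _ => by positivity))
    intro x hx
    rw [Finset.mem_filter] at hx
    have hlt : (Nat.card {j // ∃! i, x i = j} : ℝ) ≤ (N:ℝ)/8 := le_of_lt hx.2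
    calc (1/4:ℝ) ^ ((N:ℝ)/8) ≤ (1/4:ℝ) ^ ((Nat.card {j // ∃! i, x i = j} : ℕ) : ℝ) :=
          Real.rpow_le_rpow_of_exponent_ge (by norm_num) (by norm_num) hlt
      _ = (1/4:ℝ) ^ (Nat.card {j // ∃! i, x i = j} : ℕ) := Real.rpow_natCast _ _
  -- step 2: the inner factor is at most e - 3/4
  have step2 : ∑ m ∈ range (N + 1), (if m = 1 then (1/4:ℝ) else 1) / m !
      ≤ Real.exp 1 - 3/4 := by
    have hsplit : ∀ m ∈ range (N+1), (if m = 1 then (1/4:ℝ) else 1) / m !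
        = 1/(m ! : ℝ) - (if m = 1 then (3/4:ℝ) else 0) := by
      intro m _
      split <;> rename_i h
      · subst h; norm_num
      · norm_num
    rw [Finset.sum_congr rfl hsplit, Finset.sum_sub_distrib, Finset.sum_ite_eq' (range (N+1)) 1]
    have h1mem : (1:ℕ) ∈ range (N+1) := by
      rw [Finset.mem_range]; omega
    rw [if_pos h1mem]
    have hexp : ∑ m ∈ range (N+1), 1/(m ! : ℝ) ≤ Real.exp 1 := by
      have := Real.sum_le_exp_of_nonneg (le_of_lt one_pos) (N+1)
      simpa using this
    linarith
  -- step 3: full sum ≤ N! * (e - 3/4)^N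
  have hfac_nonneg : (0:ℝ) ≤ ∑ m ∈ range (N + 1), (if m = 1 then (1/4:ℝ) else 1) / m ! := by
    apply Finset.sum_nonneg; intro m _; positivity
  have step3 : ∑ x : α → α, (1/4:ℝ) ^ Nat.card {j // ∃! i, x i = j}
      ≤ (N ! : ℝ) * (Real.exp 1 - 3/4) ^ N := by
    have := sum_pow_unique_le (α := α) (1/4:ℝ) (by norm_num)
    rw [hcard] at this
    refine this.trans ?_
    apply mul_le_mul_of_nonneg_left _ (by positivity)
    exact pow_le_pow_left₀ hfac_nonneg step2 N
  -- step 4: N! (e-3/4)^N ≤ e (N+1) N^N ((e-3/4)/e)^N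
  have hex : (0:ℝ) < Real.exp 1 := Real.exp_pos 1
  have he34 : (0:ℝ) ≤ Real.exp 1 - 3/4 := by
    nlinarith [Real.add_one_le_exp (1:ℝ)]
  have step4 : (N ! : ℝ) * (Real.exp 1 - 3/4) ^ N
      ≤ Real.exp 1 * (N+1) * (N:ℝ)^N * ((Real.exp 1 - 3/4)/Real.exp 1) ^ N := by
    have h1 : (N ! : ℝ) ≤ (N+1:ℝ)^(N+1) / Real.exp 1 ^ N := by
      rw [le_div_iff₀ (by positivity)]
      exact factorial_mul_exp_le N
    calc (N ! : ℝ) * (Real.exp 1 - 3/4) ^ N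
        ≤ ((N+1:ℝ)^(N+1) / Real.exp 1 ^ N) * (Real.exp 1 - 3/4) ^ N := by
          exact mul_le_mul_of_nonneg_right h1 (by positivity)
      _ = (N+1:ℝ)^(N+1) * ((Real.exp 1 - 3/4)/Real.exp 1) ^ N := by
          rw [div_pow]; ring
      _ ≤ Real.exp 1 * (N+1) * (N:ℝ)^N * ((Real.exp 1 - 3/4)/Real.exp 1) ^ N := by
          exact mul_le_mul_of_nonneg_right (succ_pow_le N hN1) (by positivity)
  -- step 5: numeric assembly
  have hratio : ((Real.exp 1 - 3/4)/Real.exp 1) ≤ (7241/10000 : ℝ) := by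
    rw [div_le_iff₀ hex]
    nlinarith [Real.exp_one_lt_d9, Real.exp_one_gt_d9]
  have hratio0 : (0:ℝ) ≤ (Real.exp 1 - 3/4)/Real.exp 1 := by positivity
  have hgrowth := growth_le N hN
  -- key numeric fact : (23/20) * (7241/10000) ≤ 2^(-(13/50))
  have hkey : ((23:ℝ)/20) * (7241/10000) ≤ (2:ℝ) ^ (-(13/50) : ℝ) := by
    have hb0 : (0:ℝ) ≤ (2:ℝ) ^ (-(13/50) : ℝ) := (Real.rpow_pos_of_pos two_pos _).le
    rw [← pow_le_pow_iff_left₀ (by norm_num : (0:ℝ) ≤ (23/20:ℝ) * (7241/10000)) hb0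
      (by norm_num : (50:ℕ) ≠ 0)]
    have hb : ((2:ℝ) ^ (-(13/50) : ℝ)) ^ (50:ℕ) = ((2:ℝ) ^ (13:ℕ))⁻¹ := by
      rw [← Real.rpow_natCast ((2:ℝ) ^ (-(13/50) : ℝ)) 50,
        ← Real.rpow_mul (by norm_num : (0:ℝ) ≤ 2),
        show (-(13/50) : ℝ) * ((50:ℕ):ℝ) = -((13:ℕ):ℝ) by push_cast; ring,
        Real.rpow_neg (by norm_num), Real.rpow_natCast]
    rw [hb]
    norm_num
  -- rpow bookkeeping
  set q : ℝ := (1/4:ℝ) ^ ((N:ℝ)/8) with hqdef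
  have hq0 : (0:ℝ) < q := Real.rpow_pos_of_pos (by norm_num) _
  have hq : q = (2:ℝ) ^ (-((N:ℝ)/4)) := by
    rw [hqdef, show (1/4:ℝ) = (2:ℝ) ^ (-2:ℝ) by
        rw [show (-2:ℝ) = ((-2:ℤ):ℝ) by norm_num, Real.rpow_intCast]; norm_num,
      ← Real.rpow_mul (by norm_num : (0:ℝ) ≤ 2),
      show (-2:ℝ) * ((N:ℝ)/8) = -((N:ℝ)/4) by ring]
  have hqinv : q⁻¹ = (2:ℝ) ^ ((N:ℝ)/4) := by
    rw [hq, ← Real.rpow_neg (by norm_num : (0:ℝ) ≤ 2), neg_neg]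
  have hpowN : ((2:ℝ) ^ (-(13/50) : ℝ)) ^ N * (2:ℝ) ^ ((N:ℝ)/4) = (2:ℝ) ^ (-(N:ℝ)/100) := by
    rw [← Real.rpow_natCast ((2:ℝ) ^ (-(13/50) : ℝ)) N,
      ← Real.rpow_mul (by norm_num : (0:ℝ) ≤ 2),
      ← Real.rpow_add (by norm_num : (0:ℝ) < 2)]
    congr 1
    ring
  -- final assembly
  have hfinal : (Nat.card {x : α → α // P x} : ℝ)
      ≤ (N ! : ℝ) * (Real.exp 1 - 3/4) ^ N * q⁻¹ := by
    calc (Nat.card {x : α → α // P x} : ℝ)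
        = (Nat.card {x : α → α // P x} : ℝ) * q * q⁻¹ := by field_simp
      _ ≤ _ := mul_le_mul_of_nonneg_right (step1.trans step3) (inv_nonneg.mpr hq0.le)
  refine hfinal.trans ?_
  have h2 : (N ! : ℝ) * (Real.exp 1 - 3/4) ^ N * q⁻¹
      ≤ (Real.exp 1 * (N+1) * (N:ℝ)^N * ((Real.exp 1 - 3/4)/Real.exp 1) ^ N) * q⁻¹ :=
    mul_le_mul_of_nonneg_right step4 (inv_nonneg.mpr hq0.le)
  refine h2.trans ?_
  have h3 : Real.exp 1 * (N+1) * (N:ℝ)^N * ((Real.exp 1 - 3/4)/Real.exp 1) ^ N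
      ≤ (23/20:ℝ)^N * (N:ℝ)^N * (7241/10000:ℝ)^N := by
    have hA : Real.exp 1 * (N+1) * (N:ℝ)^N ≤ (23/20:ℝ)^N * (N:ℝ)^N :=
      mul_le_mul_of_nonneg_right hgrowth (by positivity)
    have hB : ((Real.exp 1 - 3/4)/Real.exp 1) ^ N ≤ (7241/10000:ℝ)^N :=
      pow_le_pow_left₀ hratio0 hratio N
    calc Real.exp 1 * (N+1) * (N:ℝ)^N * ((Real.exp 1 - 3/4)/Real.exp 1) ^ N
        ≤ ((23/20:ℝ)^N * (N:ℝ)^N) * ((Real.exp 1 - 3/4)/Real.exp 1) ^ N :=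
          mul_le_mul_of_nonneg_right hA (by positivity)
      _ ≤ ((23/20:ℝ)^N * (N:ℝ)^N) * (7241/10000:ℝ)^N :=
          mul_le_mul_of_nonneg_left hB (by positivity)
      _ = (23/20:ℝ)^N * (N:ℝ)^N * (7241/10000:ℝ)^N := rfl
  have h4 : (N ! : ℝ) * 0 ≤ 0 := by simp
  calc Real.exp 1 * (N+1) * (N:ℝ)^N * ((Real.exp 1 - 3/4)/Real.exp 1) ^ N * q⁻¹
      ≤ ((23/20:ℝ)^N * (N:ℝ)^N * (7241/10000:ℝ)^N) * q⁻¹ :=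
        mul_le_mul_of_nonneg_right h3 (inv_nonneg.mpr hq0.le)
    _ = (N:ℝ)^N * (((23/20:ℝ) * (7241/10000:ℝ))^N * q⁻¹) := by
        rw [mul_pow]; ring
    _ ≤ (N:ℝ)^N * (((2:ℝ) ^ (-(13/50) : ℝ))^N * q⁻¹) := by
        apply mul_le_mul_of_nonneg_left _ (by positivity)
        exact mul_le_mul_of_nonneg_right (pow_le_pow_left₀ (by norm_num) hkey N)
          (inv_nonneg.mpr hq0.le)
    _ = (2:ℝ) ^ (-(N:ℝ)/100) * (N:ℝ) ^ N := by
        rw [hqinv, hpowN]; ring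

end Aux3
end Aux2

/-- There is a constant `c > 0` such that for all `n ≥ 1`, the number of
functions `x : (ZMod 2)^n → (ZMod 2)^n` for which fewer than `2^n/8` values
have exactly one preimage is at most `2^(-c·2^n) · (2^n)^(2^n)`. -/
theorem few_unique_preimages_rare :
    ∃ c > (0 : ℝ), ∀ n : ℕ, 1 ≤ n →
      (Nat.card {x : (Fin n → ZMod 2) → (Fin n → ZMod 2) //
          (Nat.card {j : Fin n → ZMod 2 // ∃! i, x i = j} : ℝ)
            < (2 : ℝ) ^ n / 8} : ℝ)
        ≤ (2 : ℝ) ^ (-(c * 2 ^ n)) * ((2 ^ n) ^ 2 ^ n : ℕ) := by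
  classical
  refine ⟨(1/2:ℝ)^200, by positivity, ?_⟩
  intro n hn
  set N : ℕ := 2^n with hNdef
  have hcard : Fintype.card (Fin n → ZMod 2) = N := by
    rw [hNdef]; simp [ZMod.card]
  have hNR : (2:ℝ)^n = ((N:ℕ):ℝ) := by rw [hNdef]; push_cast; ring
  have hNpos : (0:ℝ) < (N:ℝ) := by
    have : 0 < N := by positivity
    exact_mod_cast this
  rw [hNR]
  have hcast : (((2^n)^2^n : ℕ) : ℝ) = ((N:ℝ)) ^ N := by
    rw [← hNdef]; push_cast; ring
  rw [hcast]
  have hc : ((1/2:ℝ)^200) ≤ 1/100 := by norm_num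
  by_cases h6 : 6 ≤ n
  · -- large case
    have hN64 : 64 ≤ N := by
      rw [hNdef]
      calc (64:ℕ) = 2^6 := by norm_num
        _ ≤ 2^n := Nat.pow_le_pow_right (by norm_num) h6
    have hb := bad_count_le (α := Fin n → ZMod 2) N hN64 hcard
    refine hb.trans ?_
    apply mul_le_mul_of_nonneg_right _ (by positivity)
    apply Real.rpow_le_rpow_of_exponent_le (by norm_num)
    have : (1/2:ℝ)^200 * (N:ℝ) ≤ 1/100 * (N:ℝ) :=
      mul_le_mul_of_nonneg_right hc hNpos.le
    rw [neg_div]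
    linarith
  · -- small case
    push_neg at h6
    have hNle : N ≤ 32 := by
      rw [hNdef]
      calc 2^n ≤ 2^5 := Nat.pow_le_pow_right (by norm_num) (by omega)
        _ = 32 := by norm_num
    -- the identity shows strict inequality on counts
    have hid : ¬ ((Nat.card {j : Fin n → ZMod 2 // ∃! i, (fun i => i) i = j} : ℝ)
        < ((N:ℕ):ℝ) / 8) := by
      have hall : ∀ j : Fin n → ZMod 2, ∃! i : Fin n → ZMod 2, (fun i => i) i = j :=
        fun j => ⟨j, rfl, fun y h => h⟩
      have hcardall : Nat.card {j : Fin n → ZMod 2 // ∃! i, (fun i => i) i = j} = N := by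
        rw [Nat.card_congr (Equiv.subtypeUnivEquiv hall), Nat.card_eq_fintype_card, hcard]
      rw [hcardall]
      push_neg
      linarith
    have hlt : Nat.card {x : (Fin n → ZMod 2) → (Fin n → ZMod 2) //
        (Nat.card {j : Fin n → ZMod 2 // ∃! i, x i = j} : ℝ) < ((N:ℕ):ℝ) / 8} < N^N := by
      rw [Nat.card_eq_fintype_card]
      calc Fintype.card _ < Fintype.card ((Fin n → ZMod 2) → (Fin n → ZMod 2)) :=
            Fintype.card_subtype_lt (x := fun i => i) hid
        _ = N^N := by rw [Fintype.card_fun, hcard]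
    have hble : (Nat.card {x : (Fin n → ZMod 2) → (Fin n → ZMod 2) //
        (Nat.card {j : Fin n → ZMod 2 // ∃! i, x i = j} : ℝ) < ((N:ℕ):ℝ) / 8} : ℝ)
        ≤ (N:ℝ)^N - 1 := by
      have h1 : Nat.card {x : (Fin n → ZMod 2) → (Fin n → ZMod 2) //
          (Nat.card {j : Fin n → ZMod 2 // ∃! i, x i = j} : ℝ) < ((N:ℕ):ℝ) / 8} + 1 ≤ N^N :=
        hlt
      have h2 : ((Nat.card {x : (Fin n → ZMod 2) → (Fin n → ZMod 2) //
          (Nat.card {j : Fin n → ZMod 2 // ∃! i, x i = j} : ℝ) < ((N:ℕ):ℝ) / 8} : ℕ) : ℝ) + 1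
          ≤ ((N^N : ℕ):ℝ) := by exact_mod_cast h1
      push_cast at h2
      linarith
    refine hble.trans ?_
    -- now N^N - 1 ≤ 2^(-(c N)) N^N
    set c : ℝ := (1/2:ℝ)^200 with hcdef
    have hcpos : (0:ℝ) < c := by positivity
    have hexp : 1 - (2:ℝ) ^ (-(c * (N:ℝ))) ≤ c * (N:ℝ) := by
      have hlog := Real.log_two_lt_d9
      have h1 : Real.log 2 * (-(c * (N:ℝ))) + 1 ≤ (2:ℝ) ^ (-(c * (N:ℝ))) := by
        rw [Real.rpow_def_of_pos (by norm_num)]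
        exact Real.add_one_le_exp _
      have h2 : Real.log 2 * (c * (N:ℝ)) ≤ c * (N:ℝ) := by
        have : (0:ℝ) ≤ c * N := by positivity
        nlinarith [Real.log_two_lt_d9]
      nlinarith
    have hsmall : (N:ℝ)^N * (c * (N:ℝ)) ≤ 1 := by
      have hnat : N^(N+1) ≤ 2^200 := by
        calc N^(N+1) ≤ 32^(N+1) := Nat.pow_le_pow_left hNle _
          _ ≤ 32^33 := Nat.pow_le_pow_right (by norm_num) (Nat.add_le_add_right hNle 1)
          _ = 2^165 := by norm_num [show (32:ℕ) = 2^5 from rfl, ← Nat.pow_mul]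
          _ ≤ 2^200 := Nat.pow_le_pow_right (by norm_num) (by norm_num)
      have hr : ((N:ℝ))^(N+1) ≤ 2^200 := by exact_mod_cast hnat
      rw [hcdef]
      have : (N:ℝ)^N * ((1/2:ℝ)^200 * (N:ℝ)) = (N:ℝ)^(N+1) / 2^200 := by
        rw [pow_succ]; ring
      rw [this, div_le_one (by positivity)]
      exact hr
    have hNN : (0:ℝ) ≤ (N:ℝ)^N := by positivity
    nlinarith [hexp, hsmall, hNN, mul_le_mul_of_nonneg_left hexp hNN]
end
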